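/- The Dirac operator on L²((0,L), ℂ²) acting as ψ ↦ J ψ' with J = [[0,-1],[1,0]], with domain {ψ ∈ H¹((0,L),ℂ²) : ψ₁(0) = ψ₁(L) = 0}, has spectrum consisting exactly of the simple eigenvalues E_k = kπ/L for k ∈ ℤ, with normalized eigenfunctions (1/√L)(sin(E_k x), cos(E_k x))ᵗ. -/

import Mathlib

open Real

lemma hasDerivAt_csin (E x : ℝ) :
    HasDerivAt (fun x : ℝ => (Real.sin (E * x) : ℂ)) ((E : ℂ) * Real.cos (E * x)) x := by
  have hm : HasDerivAt (fun y : ℝ => E * y) E x := by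
    simpa using (hasDerivAt_id x).const_mul E
  have h : HasDerivAt (fun x : ℝ => Real.sin (E * x)) (Real.cos (E * x) * E) x :=
    (Real.hasDerivAt_sin (E * x)).comp x hm
  have := h.ofReal_comp
  convert this using 1
  push_cast; ring

lemma hasDerivAt_ccos (E x : ℝ) :
    HasDerivAt (fun x : ℝ => (Real.cos (E * x) : ℂ)) (-((E : ℂ) * Real.sin (E * x))) x := by
  have hm : HasDerivAt (fun y : ℝ => E * y) E x := by
    simpa using (hasDerivAt_id x).const_mul E
  have h : HasDerivAt (fun x : ℝ => Real.cos (E * x)) (-Real.sin (E * x) * E) x :=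
    (Real.hasDerivAt_cos (E * x)).comp x hm
  have := h.ofReal_comp
  convert this using 1
  push_cast; ring

lemma mulVec_eq (v : Fin 2 → ℂ) :
    (!![0, -1; 1, 0] : Matrix (Fin 2) (Fin 2) ℂ).mulVec v = ![-(v 1), v 0] := by
  funext i
  fin_cases i <;> simp [Matrix.mulVec, dotProduct, Fin.sum_univ_two, Matrix.vecHead, Matrix.vecTail]

lemma cs_sq (θ : ℝ) : (Real.cos θ : ℂ) ^ 2 + (Real.sin θ : ℂ) ^ 2 = 1 := by
  rw [← Complex.ofReal_pow, ← Complex.ofReal_pow, ← Complex.ofReal_add,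
    Real.cos_sq_add_sin_sq, Complex.ofReal_one]

/-- core: solution with ψ₁(0)=0 is determined -/
lemma core (E : ℝ) (ψ ψd : ℝ → Fin 2 → ℂ)
    (hderiv : ∀ x, HasDerivAt ψ (ψd x) x)
    (hode : ∀ x, (!![0, -1; 1, 0] : Matrix (Fin 2) (Fin 2) ℂ).mulVec (ψd x) = (E : ℂ) • ψ x)
    (hbc : ψ 0 0 = 0) :
    ∀ x, ψ x = ![ψ 0 1 * Real.sin (E * x), ψ 0 1 * Real.cos (E * x)] := by
  have hd0 : ∀ x, ψd x 0 = (E : ℂ) * ψ x 1 := by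
    intro x
    have := congrFun (hode x) 1
    simpa [mulVec_eq, Matrix.vecHead] using this
  have hd1 : ∀ x, ψd x 1 = -((E : ℂ) * ψ x 0) := by
    intro x
    have h2 := congrFun (hode x) 0
    rw [mulVec_eq] at h2
    simp only [Matrix.cons_val_zero, Pi.smul_apply, smul_eq_mul] at h2
    linear_combination -h2
  have hc0 : ∀ x, HasDerivAt (fun x => ψ x 0) (ψd x 0) x := fun x =>
    (hasDerivAt_pi.mp (hderiv x)) 0
  have hc1 : ∀ x, HasDerivAt (fun x => ψ x 1) (ψd x 1) x := fun x =>
    (hasDerivAt_pi.mp (hderiv x)) 1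
  set u : ℝ → ℂ := fun x => ψ x 0 * Real.cos (E * x) - ψ x 1 * Real.sin (E * x) with hu
  set v : ℝ → ℂ := fun x => ψ x 0 * Real.sin (E * x) + ψ x 1 * Real.cos (E * x) with hv
  have hud : ∀ x, HasDerivAt u 0 x := by
    intro x
    have h := ((hc0 x).mul (hasDerivAt_ccos E x)).sub ((hc1 x).mul (hasDerivAt_csin E x))
    exact h.congr_deriv (by rw [hd0, hd1]; ring)
  have hvd : ∀ x, HasDerivAt v 0 x := by
    intro x
    have h := ((hc0 x).mul (hasDerivAt_csin E x)).add ((hc1 x).mul (hasDerivAt_ccos E x))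
    exact h.congr_deriv (by rw [hd0, hd1]; ring)
  have huc : ∀ x, u x = 0 := by
    intro x
    have := is_const_of_deriv_eq_zero (f := u) (fun y => (hud y).differentiableAt)
      (fun y => (hud y).deriv) x 0
    simpa [hu, hbc] using this
  have hvc : ∀ x, v x = ψ 0 1 := by
    intro x
    have := is_const_of_deriv_eq_zero (f := v) (fun y => (hvd y).differentiableAt)
      (fun y => (hvd y).deriv) x 0
    simpa [hv, hbc] using this
  intro x
  have h1 := huc x
  have h2 := hvc x
  simp only [hu, hv] at h1 h2
  funext i
  fin_cases i
  · show ψ x 0 = ψ 0 1 * Real.sin (E * x)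
    linear_combination (Real.cos (E * x) : ℂ) * h1 + (Real.sin (E * x) : ℂ) * h2 +
      (-ψ x 0) * cs_sq (E * x)
  · show ψ x 1 = ψ 0 1 * Real.cos (E * x)
    linear_combination (-(Real.sin (E * x) : ℂ)) * h1 + (Real.cos (E * x) : ℂ) * h2 +
      (-ψ x 1) * cs_sq (E * x)

lemma vec_hasDerivAt (E x : ℝ) :
    HasDerivAt (fun x : ℝ => ![(Real.sin (E * x) : ℂ), (Real.cos (E * x) : ℂ)])
      ![(E : ℂ) * Real.cos (E * x), -((E : ℂ) * Real.sin (E * x))] x := by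
  apply hasDerivAt_pi.mpr
  intro i
  fin_cases i
  · simpa using hasDerivAt_csin E x
  · simpa using hasDerivAt_ccos E x

theorem free_dirac_dirichlet_spectrum (L : ℝ) (hL : 0 < L) :
    -- the eigenvalues are exactly the kπ/L
    (∀ E : ℝ,
      ((∃ ψ ψd : ℝ → Fin 2 → ℂ,
          (∀ x, HasDerivAt ψ (ψd x) x) ∧
          (∀ x, (!![0, -1; 1, 0] : Matrix (Fin 2) (Fin 2) ℂ).mulVec (ψd x) = (E : ℂ) • ψ x) ∧
          ψ 0 0 = 0 ∧ ψ L 0 = 0 ∧ ∃ x ∈ Set.Icc 0 L, ψ x ≠ 0)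
        ↔ ∃ k : ℤ, E = k * π / L))
    ∧
    -- explicit normalized eigenfunctions
    (∀ k : ℤ,
      (∀ x : ℝ, HasDerivAt
          (fun x : ℝ => (((Real.sqrt L : ℂ))⁻¹ •
            ![(Real.sin ((k * π / L) * x) : ℂ), (Real.cos ((k * π / L) * x) : ℂ)]))
          (((Real.sqrt L : ℂ))⁻¹ •
            ![(((k * π / L) : ℝ) * Real.cos ((k * π / L) * x) : ℂ),
              (-(((k * π / L) : ℝ) * Real.sin ((k * π / L) * x)) : ℂ)]) x) ∧
      (∀ x : ℝ, (!![0, -1; 1, 0] : Matrix (Fin 2) (Fin 2) ℂ).mulVec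
            (((Real.sqrt L : ℂ))⁻¹ •
              ![(((k * π / L) : ℝ) * Real.cos ((k * π / L) * x) : ℂ),
                (-(((k * π / L) : ℝ) * Real.sin ((k * π / L) * x)) : ℂ)])
          = ((k * π / L : ℝ) : ℂ) •
              (((Real.sqrt L : ℂ))⁻¹ •
                ![(Real.sin ((k * π / L) * x) : ℂ), (Real.cos ((k * π / L) * x) : ℂ)])) ∧
      (∫ x in (0 : ℝ)..L,
          (‖(((Real.sqrt L : ℂ))⁻¹ * (Real.sin ((k * π / L) * x) : ℂ))‖ ^ 2 +
           ‖(((Real.sqrt L : ℂ))⁻¹ * (Real.cos ((k * π / L) * x) : ℂ))‖ ^ 2)) = 1)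
    ∧
    -- simplicity: every solution with the boundary condition is a multiple of it
    (∀ k : ℤ, ∀ ψ ψd : ℝ → Fin 2 → ℂ,
      (∀ x, HasDerivAt ψ (ψd x) x) →
      (∀ x, (!![0, -1; 1, 0] : Matrix (Fin 2) (Fin 2) ℂ).mulVec (ψd x)
          = ((k * π / L : ℝ) : ℂ) • ψ x) →
      ψ 0 0 = 0 →
      ∃ c : ℂ, ∀ x : ℝ, ψ x = c • (((Real.sqrt L : ℂ))⁻¹ •
        ![(Real.sin ((k * π / L) * x) : ℂ), (Real.cos ((k * π / L) * x) : ℂ)])) := by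
  have hLne : L ≠ 0 := hL.ne'
  have hsqrt : Real.sqrt L ≠ 0 := (Real.sqrt_pos.mpr hL).ne'
  have hsqrtC : (Real.sqrt L : ℂ) ≠ 0 := by exact_mod_cast hsqrt
  refine ⟨?_, ?_, ?_⟩
  · -- part 1
    intro E
    constructor
    · rintro ⟨ψ, ψd, hderiv, hode, hbc0, hbcL, x0, _, hx0⟩
      have hform := core E ψ ψd hderiv hode hbc0
      have hv0 : ψ 0 1 ≠ 0 := by
        intro h0
        apply hx0
        rw [hform x0, h0]
        funext i; fin_cases i <;> simp
      have hL0 : ψ 0 1 * (Real.sin (E * L) : ℂ) = 0 := by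
        have := congrFun (hform L) 0
        simpa [hbcL] using this.symm
      have hsin : Real.sin (E * L) = 0 := by
        rcases mul_eq_zero.mp hL0 with h | h
        · exact absurd h hv0
        · exact_mod_cast h
      obtain ⟨n, hn⟩ := Real.sin_eq_zero_iff.mp hsin
      exact ⟨n, by field_simp [hLne] at hn ⊢; linarith⟩
    · rintro ⟨k, rfl⟩
      set E : ℝ := k * π / L with hE
      refine ⟨fun x => ![(Real.sin (E * x) : ℂ), (Real.cos (E * x) : ℂ)],
        fun x => ![(E : ℂ) * Real.cos (E * x), -((E : ℂ) * Real.sin (E * x))],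
        fun x => vec_hasDerivAt E x, ?_, ?_, ?_, 0, ⟨le_refl 0, hL.le⟩, ?_⟩
      · intro x
        rw [mulVec_eq]
        funext i; fin_cases i <;> simp <;> ring
      · simp
      · have hEL : E * L = k * π := by rw [hE]; field_simp
        have hs : Real.sin (E * L) = 0 := by
          rw [hEL]; exact_mod_cast Real.sin_int_mul_pi k
        simp [hs]
      · intro h
        have := congrFun h 1
        simp at this
  · -- part 2
    intro k
    set E : ℝ := k * π / L with hE
    refine ⟨?_, ?_, ?_⟩
    · intro x
      exact ((vec_hasDerivAt E x).const_smul ((Real.sqrt L : ℂ))⁻¹)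
    · intro x
      rw [Matrix.mulVec_smul, mulVec_eq]
      rw [smul_comm]
      congr 1
      funext i; fin_cases i <;> simp <;> ring
    · have hcongr : ∀ x : ℝ,
          (‖(((Real.sqrt L : ℂ))⁻¹ * (Real.sin (E * x) : ℂ))‖ ^ 2 +
           ‖(((Real.sqrt L : ℂ))⁻¹ * (Real.cos (E * x) : ℂ))‖ ^ 2) = L⁻¹ := by
        intro x
        simp only [norm_mul, norm_inv, Complex.norm_real, abs_of_nonneg (Real.sqrt_nonneg L),
          mul_pow, Real.norm_eq_abs, sq_abs, inv_pow]
        rw [← mul_add, Real.sin_sq_add_cos_sq, mul_one, Real.sq_sqrt hL.le]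
      rw [intervalIntegral.integral_congr (g := fun _ => L⁻¹) (fun x _ => hcongr x)]
      rw [intervalIntegral.integral_const, smul_eq_mul, sub_zero, mul_inv_cancel₀ hLne]
  · -- part 3
    intro k ψ ψd hderiv hode hbc
    set E : ℝ := k * π / L with hE
    have hform := core E ψ ψd hderiv hode hbc
    refine ⟨(Real.sqrt L : ℂ) * ψ 0 1, fun x => ?_⟩
    rw [hform x, smul_smul]
    funext i
    fin_cases i <;>
      simp [Pi.smul_apply, smul_eq_mul] <;> field_simp <;> ring <;> simp
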